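/- arXiv:1411.3363 — 7 statements merged into one kernel-verified Lean document; each statement's English description precedes it below -/
import Mathlib

section
/- Let n ≥ 3, let g be a symmetric invertible n×n real matrix with inverse matrix G, let R : Fin n → Fin n → Fin n → Fin n → ℝ be a (0,4)-tensor and S : Fin n → Fin n → ℝ a (0,2)-tensor. Define the (0,4)-tensor R̄ by R̄ m i j k = R m i j k + g m k * S i j − g m j * S i k + g i j * S m k − g i k * S m j. Define the Ricci contraction of a (0,4)-tensor T by Ric(T) i j = Σ_{m,k} G m k * T m i j k, its scalar by sc(T) = Σ_{i,j} G i j * Ric(T) i j, and its concircular tensor by Z(T) m i j k = T m i j k − (sc(T)/(n*(n−1))) * (g m k * g i j − g m j * g i k). Then Z(R̄) = Z(R) (as (0,4)-tensors) if and only if there exists β : ℝ such that S i j = β * g i j for all i, j. -/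
/-- Ricci contraction of a (0,4)-tensor: `Ric(T) i j = Σ_{m,k} G m k * T m i j k`. -/
noncomputable def ricci04 {n : ℕ} (G : Fin n → Fin n → ℝ)
    (T : Fin n → Fin n → Fin n → Fin n → ℝ) (i j : Fin n) : ℝ :=
  ∑ m, ∑ k, G m k * T m i j k

/-- Scalar of a (0,4)-tensor: `sc(T) = Σ_{i,j} G i j * Ric(T) i j`. -/
noncomputable def scalar04 {n : ℕ} (G : Fin n → Fin n → ℝ)
    (T : Fin n → Fin n → Fin n → Fin n → ℝ) : ℝ :=
  ∑ i, ∑ j, G i j * ricci04 G T i j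

/-- Concircular curvature tensor of a (0,4)-tensor. -/
noncomputable def concirc04 {n : ℕ} (g G : Fin n → Fin n → ℝ)
    (T : Fin n → Fin n → Fin n → Fin n → ℝ) (m i j k : Fin n) : ℝ :=
  T m i j k - (scalar04 G T / ((n : ℝ) * ((n : ℝ) - 1))) *
    (g m k * g i j - g m j * g i k)

/-- Theorem 4.2: the semi-symmetric non-metric connection is S-concircular
iff the concircular curvature tensors of `∇` and `∇̄` coincide. -/
theorem stmt_0 (n : ℕ) (hn : 3 ≤ n) (g G : Fin n → Fin n → ℝ)
    (hsymm : ∀ i j, g i j = g j i)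
    (hgG : ∀ i j, (∑ k, g i k * G k j) = if i = j then (1 : ℝ) else 0)
    (hGg : ∀ i j, (∑ k, G i k * g k j) = if i = j then (1 : ℝ) else 0)
    (R : Fin n → Fin n → Fin n → Fin n → ℝ)
    (S : Fin n → Fin n → ℝ)
    (Rbar : Fin n → Fin n → Fin n → Fin n → ℝ)
    (hRbar : ∀ m i j k, Rbar m i j k =
      R m i j k + g m k * S i j - g m j * S i k + g i j * S m k - g i k * S m j) :
    (∀ m i j k, concirc04 g G Rbar m i j k = concirc04 g G R m i j k) ↔
      ∃ β : ℝ, ∀ i j, S i j = β * g i j := by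
  have hn3 : (3 : ℝ) ≤ (n : ℝ) := by exact_mod_cast hn
  have hn0 : (n : ℝ) ≠ 0 := by linarith
  have hn1 : (n : ℝ) - 1 ≠ 0 := by linarith
  have hn2 : (n : ℝ) - 2 ≠ 0 := by linarith
  -- generic double-sum helpers
  have dadd : ∀ (f h : Fin n → Fin n → ℝ),
      (∑ i, ∑ j, (f i j + h i j)) = (∑ i, ∑ j, f i j) + (∑ i, ∑ j, h i j) := by
    intro f h; simp [Finset.sum_add_distrib]
  have dsub : ∀ (f h : Fin n → Fin n → ℝ),
      (∑ i, ∑ j, (f i j - h i j)) = (∑ i, ∑ j, f i j) - (∑ i, ∑ j, h i j) := by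
    intro f h; simp [Finset.sum_sub_distrib]
  have dconst : ∀ (c : ℝ) (f : Fin n → Fin n → ℝ),
      (∑ i, ∑ j, c * f i j) = c * (∑ i, ∑ j, f i j) := by
    intro c f; simp [Finset.mul_sum]
  -- G is symmetric
  have hGsymm : ∀ i j, G i j = G j i := by
    intro i j
    have h1 : ∑ k, ∑ l, (G i k * g k l) * G j l = G j i := by
      rw [Finset.sum_comm]
      calc ∑ l, ∑ k, (G i k * g k l) * G j l
          = ∑ l, (∑ k, G i k * g k l) * G j l := by
            refine Finset.sum_congr rfl fun l _ => ?_; rw [Finset.sum_mul]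
        _ = ∑ l, (if i = l then (1:ℝ) else 0) * G j l := by
            refine Finset.sum_congr rfl fun l _ => ?_; rw [hGg]
        _ = G j i := by simp
    have h2 : ∑ k, ∑ l, (G i k * g k l) * G j l = G i j := by
      calc ∑ k, ∑ l, (G i k * g k l) * G j l
          = ∑ k, G i k * (∑ l, G j l * g l k) := by
            refine Finset.sum_congr rfl fun k _ => ?_
            rw [Finset.mul_sum]
            refine Finset.sum_congr rfl fun l _ => ?_
            rw [hsymm k l]; ring
        _ = ∑ k, G i k * (if j = k then (1:ℝ) else 0) := by
            refine Finset.sum_congr rfl fun k _ => ?_; rw [hGg]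
        _ = G i j := by simp
    rw [← h2, h1]
  -- trace of G against g is n
  have htr : ∑ m, ∑ k, G m k * g m k = (n : ℝ) := by
    have h1 : ∀ m : Fin n, ∑ k, G m k * g m k = 1 := by
      intro m
      calc ∑ k, G m k * g m k = ∑ k, G m k * g k m := by
            refine Finset.sum_congr rfl fun k _ => ?_; rw [hsymm m k]
        _ = 1 := by rw [hGg]; simp
    simp [h1]
  -- contraction lemmas
  have hc1 : ∀ (c : ℝ), (∑ m, ∑ k, G m k * (g m k * c)) = (n : ℝ) * c := by
    intro c
    calc ∑ m, ∑ k, G m k * (g m k * c)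
        = (∑ m, ∑ k, G m k * g m k) * c := by
          rw [Finset.sum_mul]
          refine Finset.sum_congr rfl fun m _ => ?_
          rw [Finset.sum_mul]
          exact Finset.sum_congr rfl fun k _ => by ring
      _ = (n : ℝ) * c := by rw [htr]
  have hc2 : ∀ (f : Fin n → ℝ) (j : Fin n),
      (∑ m, ∑ k, G m k * (g m j * f k)) = f j := by
    intro f j
    rw [Finset.sum_comm]
    calc ∑ k, ∑ m, G m k * (g m j * f k)
        = ∑ k, (∑ m, G k m * g m j) * f k := by
          refine Finset.sum_congr rfl fun k _ => ?_
          rw [Finset.sum_mul]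
          refine Finset.sum_congr rfl fun m _ => ?_
          rw [hGsymm m k]; ring
      _ = ∑ k, (if k = j then (1:ℝ) else 0) * f k := by
          refine Finset.sum_congr rfl fun k _ => ?_; rw [hGg]
      _ = f j := by simp
  have hc3 : ∀ (c : ℝ) (T : Fin n → Fin n → ℝ),
      (∑ m, ∑ k, G m k * (c * T m k)) = c * (∑ m, ∑ k, G m k * T m k) := by
    intro c T
    rw [Finset.mul_sum]
    refine Finset.sum_congr rfl fun m _ => ?_
    rw [Finset.mul_sum]
    exact Finset.sum_congr rfl fun k _ => by ring
  have hc4 : ∀ (f : Fin n → ℝ) (i : Fin n),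
      (∑ m, ∑ k, G m k * (g i k * f m)) = f i := by
    intro f i
    calc ∑ m, ∑ k, G m k * (g i k * f m)
        = ∑ m, (∑ k, G m k * g k i) * f m := by
          refine Finset.sum_congr rfl fun m _ => ?_
          rw [Finset.sum_mul]
          refine Finset.sum_congr rfl fun k _ => ?_
          rw [hsymm i k]; ring
      _ = ∑ m, (if m = i then (1:ℝ) else 0) * f m := by
          refine Finset.sum_congr rfl fun m _ => ?_; rw [hGg]
      _ = f i := by simp
  -- abbreviation for the S-trace
  set σ : ℝ := ∑ m, ∑ k, G m k * S m k with hσdef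
  -- master contraction of the D-type tensor
  have hmaster : ∀ (i j : Fin n),
      (∑ m, ∑ k, G m k * (g m k * S i j - g m j * S i k + g i j * S m k - g i k * S m j))
        = ((n : ℝ) - 2) * S i j + g i j * σ := by
    intro i j
    have expand :
        (∑ m, ∑ k, G m k * (g m k * S i j - g m j * S i k + g i j * S m k - g i k * S m j))
        = (∑ m, ∑ k, G m k * (g m k * S i j)) - (∑ m, ∑ k, G m k * (g m j * S i k))
          + (∑ m, ∑ k, G m k * (g i j * S m k)) - (∑ m, ∑ k, G m k * (g i k * S m j)) := by
      rw [← dsub, ← dadd, ← dsub]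
      refine Finset.sum_congr rfl fun m _ => Finset.sum_congr rfl fun k _ => by ring
    rw [expand, hc1, hc2 (fun k => S i k), hc3, hc4 (fun m => S m j)]
    ring
  have hmaster2 : ∀ (i j : Fin n),
      (∑ m, ∑ k, G m k * (g m k * g i j - g m j * g i k)) = ((n : ℝ) - 1) * g i j := by
    intro i j
    have expand : (∑ m, ∑ k, G m k * (g m k * g i j - g m j * g i k))
        = (∑ m, ∑ k, G m k * (g m k * g i j)) - (∑ m, ∑ k, G m k * (g m j * g i k)) := by
      rw [← dsub]
      refine Finset.sum_congr rfl fun m _ => Finset.sum_congr rfl fun k _ => by ring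
    rw [expand, hc1, hc2 (fun k => g i k)]
    ring
  -- Ricci of Rbar
  have hric : ∀ i j, ricci04 G Rbar i j =
      ricci04 G R i j + ((n : ℝ) - 2) * S i j + g i j * σ := by
    intro i j
    have expand : ricci04 G Rbar i j = ricci04 G R i j
        + ∑ m, ∑ k, G m k * (g m k * S i j - g m j * S i k + g i j * S m k - g i k * S m j) := by
      unfold ricci04
      rw [← dadd]
      refine Finset.sum_congr rfl fun m _ => Finset.sum_congr rfl fun k _ => ?_
      rw [hRbar]; ring
    rw [expand, hmaster]; ring
  -- scalar of Rbar
  have hsc : scalar04 G Rbar = scalar04 G R + 2 * ((n : ℝ) - 1) * σ := by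
    unfold scalar04
    have expand : (∑ i, ∑ j, G i j * ricci04 G Rbar i j)
        = (∑ i, ∑ j, G i j * ricci04 G R i j)
          + (((n : ℝ) - 2) * (∑ i, ∑ j, G i j * S i j)
            + (∑ i, ∑ j, G i j * (g i j * σ))) := by
      rw [← dconst, ← dadd, ← dadd]
      refine Finset.sum_congr rfl fun i _ => Finset.sum_congr rfl fun j _ => ?_
      rw [hric]; ring
    rw [expand, hc1 σ, ← hσdef]
    ring
  -- the difference of concircular tensors
  have hdiff : ∀ m i j k, concirc04 g G Rbar m i j k - concirc04 g G R m i j k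
      = (g m k * S i j - g m j * S i k + g i j * S m k - g i k * S m j)
        - (2 * σ / (n : ℝ)) * (g m k * g i j - g m j * g i k) := by
    intro m i j k
    unfold concirc04
    rw [hsc, hRbar]
    field_simp
    ring
  constructor
  · -- forward direction
    intro h
    refine ⟨σ / (n : ℝ), fun i j => ?_⟩
    have hD : ∀ m i j k,
        g m k * S i j - g m j * S i k + g i j * S m k - g i k * S m j
          = (2 * σ / (n : ℝ)) * (g m k * g i j - g m j * g i k) := by
      intro m i j k
      have := hdiff m i j k
      rw [h m i j k, sub_self] at this
      linarith [this]
    -- contract hD with G over m, k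
    have hE : ((n : ℝ) - 2) * S i j + g i j * σ
        = (2 * σ / (n : ℝ)) * (((n : ℝ) - 1) * g i j) := by
      rw [← hmaster i j, ← hmaster2 i j, ← hc3 (2 * σ / (n : ℝ)) (fun m k => g m k * g i j - g m j * g i k)]
      refine Finset.sum_congr rfl fun m _ => Finset.sum_congr rfl fun k _ => ?_
      rw [hD m i j k]
    have key : ((n : ℝ) - 2) * S i j = ((n : ℝ) - 2) * (σ / (n : ℝ) * g i j) := by
      field_simp at hE ⊢
      have h3 : ((n : ℝ) - 2) * ((n : ℝ) * S i j - g i j * σ) = 0 := by linear_combination hE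
      have h4 := (mul_eq_zero.mp h3).resolve_left hn2
      linarith [h4]
    exact mul_left_cancel₀ hn2 key
  · -- converse direction
    rintro ⟨β, hS⟩ m i j k
    have hσ : σ = (n : ℝ) * β := by
      rw [hσdef, ← hc1 β]
      refine Finset.sum_congr rfl fun m _ => Finset.sum_congr rfl fun k _ => ?_
      rw [hS]; ring
    have := hdiff m i j k
    rw [hσ] at this
    have hz : concirc04 g G Rbar m i j k - concirc04 g G R m i j k = 0 := by
      rw [this, hS i j, hS i k, hS m k, hS m j]
      field_simp
      ring
    linarith [hz]
end

section
/- Let n ≥ 3, let g be a symmetric invertible n×n real matrix with inverse matrix G, let S : Fin n → Fin n → ℝ be a (0,2)-tensor and λ : ℝ. If for all indices m, i, j, k one has g m k * S i j − g m j * S i k + g i j * S m k − g i k * S m j = λ * (g m k * g i j − g m j * g i k), then S i j = (λ/2) * g i j for all i, j, and the trace Σ_{i,j} G i j * S i j equals n*λ/2. -/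
/-- Algebraic core of the forward direction of Theorem 4.2: if
`g_{mk}S_{ij} − g_{mj}S_{ik} + g_{ij}S_{mk} − g_{ik}S_{mj} = λ(g_{mk}g_{ij} − g_{mj}g_{ik})`
then `S_{ij} = (λ/2) g_{ij}` and the trace `g^{ij}S_{ij}` equals `nλ/2`. -/
theorem stmt_1 (n : ℕ) (hn : 3 ≤ n) (g G : Fin n → Fin n → ℝ)
    (hsymm : ∀ i j, g i j = g j i)
    (hgG : ∀ i j, (∑ k, g i k * G k j) = if i = j then (1 : ℝ) else 0)
    (hGg : ∀ i j, (∑ k, G i k * g k j) = if i = j then (1 : ℝ) else 0)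
    (S : Fin n → Fin n → ℝ) (lam : ℝ)
    (h : ∀ m i j k, g m k * S i j - g m j * S i k + g i j * S m k - g i k * S m j =
      lam * (g m k * g i j - g m j * g i k)) :
    (∀ i j, S i j = (lam / 2) * g i j) ∧
      (∑ i, ∑ j, G i j * S i j) = (n : ℝ) * lam / 2 := by
  have hn3 : (3 : ℝ) ≤ (n : ℝ) := by exact_mod_cast hn
  have hn2 : ((n : ℝ) - 2) ≠ 0 := by intro hh; linarith
  have hGgd : ∀ k : Fin n, (∑ m, G k m * g m k) = 1 := by
    intro k; simpa using hGg k k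
  set t := ∑ k, ∑ m, G k m * S m k with ht
  -- key transvected identity
  have key : ∀ i j, ((n : ℝ) - 2) * S i j + t * g i j = lam * ((n : ℝ) - 1) * g i j := by
    intro i j
    have hsum : ∑ k, ∑ m, G k m * (g m k * S i j - g m j * S i k + g i j * S m k - g i k * S m j)
        = ∑ k, ∑ m, G k m * (lam * (g m k * g i j - g m j * g i k)) := by
      refine Finset.sum_congr rfl fun k _ => Finset.sum_congr rfl fun m _ => ?_
      rw [h m i j k]
    have e1 : ∑ k, ∑ m, G k m * (g m k * S i j) = (n : ℝ) * S i j := by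
      calc ∑ k, ∑ m, G k m * (g m k * S i j)
          = ∑ k, (∑ m, G k m * g m k) * S i j := by
            refine Finset.sum_congr rfl fun k _ => ?_
            rw [Finset.sum_mul]
            exact Finset.sum_congr rfl fun m _ => by ring
        _ = ∑ _k : Fin n, S i j := by
            refine Finset.sum_congr rfl fun k _ => by rw [hGgd k, one_mul]
        _ = (n : ℝ) * S i j := by simp [mul_comm]
    have e2 : ∑ k, ∑ m, G k m * (g m j * S i k) = S i j := by
      calc ∑ k, ∑ m, G k m * (g m j * S i k)
          = ∑ k, (∑ m, G k m * g m j) * S i k := by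
            refine Finset.sum_congr rfl fun k _ => ?_
            rw [Finset.sum_mul]
            exact Finset.sum_congr rfl fun m _ => by ring
        _ = ∑ k, (if k = j then (1 : ℝ) else 0) * S i k := by
            refine Finset.sum_congr rfl fun k _ => by rw [hGg k j]
        _ = S i j := by simp
    have e3 : ∑ k, ∑ m, G k m * (g i j * S m k) = t * g i j := by
      rw [ht, Finset.sum_mul]
      refine Finset.sum_congr rfl fun k _ => ?_
      rw [Finset.sum_mul]
      exact Finset.sum_congr rfl fun m _ => by ring
    have e4 : ∑ k, ∑ m, G k m * (g i k * S m j) = S i j := by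
      rw [Finset.sum_comm]
      calc ∑ m, ∑ k, G k m * (g i k * S m j)
          = ∑ m, (∑ k, g i k * G k m) * S m j := by
            refine Finset.sum_congr rfl fun m _ => ?_
            rw [Finset.sum_mul]
            exact Finset.sum_congr rfl fun k _ => by ring
        _ = ∑ m, (if i = m then (1 : ℝ) else 0) * S m j := by
            refine Finset.sum_congr rfl fun m _ => by rw [hgG i m]
        _ = S i j := by simp
    have e5 : ∑ k, ∑ m, G k m * (lam * (g m k * g i j)) = lam * ((n : ℝ) * g i j) := by
      calc ∑ k, ∑ m, G k m * (lam * (g m k * g i j))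
          = ∑ k, (∑ m, G k m * g m k) * (lam * g i j) := by
            refine Finset.sum_congr rfl fun k _ => ?_
            rw [Finset.sum_mul]
            exact Finset.sum_congr rfl fun m _ => by ring
        _ = ∑ _k : Fin n, lam * g i j := by
            refine Finset.sum_congr rfl fun k _ => by rw [hGgd k, one_mul]
        _ = lam * ((n : ℝ) * g i j) := by
            simp [Finset.sum_const]; ring
    have e6 : ∑ k, ∑ m, G k m * (lam * (g m j * g i k)) = lam * g i j := by
      calc ∑ k, ∑ m, G k m * (lam * (g m j * g i k))
          = ∑ k, (∑ m, G k m * g m j) * (lam * g i k) := by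
            refine Finset.sum_congr rfl fun k _ => ?_
            rw [Finset.sum_mul]
            exact Finset.sum_congr rfl fun m _ => by ring
        _ = ∑ k, (if k = j then (1 : ℝ) else 0) * (lam * g i k) := by
            refine Finset.sum_congr rfl fun k _ => by rw [hGg k j]
        _ = lam * g i j := by simp
    simp only [mul_sub, mul_add, Finset.sum_sub_distrib, Finset.sum_add_distrib] at hsum
    rw [e1, e2, e3, e4, e5, e6] at hsum
    linarith [hsum]
  -- second transvection: value of the trace t
  have htval : t = (n : ℝ) * lam / 2 := by
    have hsum2 : ∑ j, ∑ i, G j i * (((n : ℝ) - 2) * S i j + t * g i j)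
        = ∑ j, ∑ i, G j i * (lam * ((n : ℝ) - 1) * g i j) := by
      refine Finset.sum_congr rfl fun j _ => Finset.sum_congr rfl fun i _ => ?_
      rw [key i j]
    have f1 : ∑ j, ∑ i, G j i * (((n : ℝ) - 2) * S i j) = ((n : ℝ) - 2) * t := by
      rw [ht, Finset.mul_sum]
      refine Finset.sum_congr rfl fun j _ => ?_
      rw [Finset.mul_sum]
      exact Finset.sum_congr rfl fun i _ => by ring
    have f2 : ∑ j, ∑ i, G j i * (t * g i j) = t * (n : ℝ) := by
      calc ∑ j, ∑ i, G j i * (t * g i j)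
          = ∑ j, (∑ i, G j i * g i j) * t := by
            refine Finset.sum_congr rfl fun j _ => ?_
            rw [Finset.sum_mul]
            exact Finset.sum_congr rfl fun i _ => by ring
        _ = ∑ _j : Fin n, t := by
            refine Finset.sum_congr rfl fun j _ => by rw [hGgd j, one_mul]
        _ = t * (n : ℝ) := by simp [mul_comm]
    have f3 : ∑ j, ∑ i, G j i * (lam * ((n : ℝ) - 1) * g i j)
        = lam * ((n : ℝ) - 1) * (n : ℝ) := by
      calc ∑ j, ∑ i, G j i * (lam * ((n : ℝ) - 1) * g i j)
          = ∑ j, (∑ i, G j i * g i j) * (lam * ((n : ℝ) - 1)) := by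
            refine Finset.sum_congr rfl fun j _ => ?_
            rw [Finset.sum_mul]
            exact Finset.sum_congr rfl fun i _ => by ring
        _ = ∑ _j : Fin n, lam * ((n : ℝ) - 1) := by
            refine Finset.sum_congr rfl fun j _ => by rw [hGgd j, one_mul]
        _ = lam * ((n : ℝ) - 1) * (n : ℝ) := by
            simp [Finset.sum_const]; ring
    simp only [mul_add, Finset.sum_add_distrib] at hsum2
    rw [f1, f2, f3] at hsum2
    have h2n : (2 * (n : ℝ) - 2) ≠ 0 := by intro hh; linarith
    have : (2 * (n : ℝ) - 2) * t = (2 * (n : ℝ) - 2) * ((n : ℝ) * lam / 2) := by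
      linear_combination hsum2
    exact mul_left_cancel₀ h2n this
  have hS : ∀ i j, S i j = (lam / 2) * g i j := by
    intro i j
    have hk := key i j
    have : ((n : ℝ) - 2) * S i j = ((n : ℝ) - 2) * ((lam / 2) * g i j) := by
      linear_combination hk - g i j * htval
    exact mul_left_cancel₀ hn2 this
  refine ⟨hS, ?_⟩
  calc ∑ i, ∑ j, G i j * S i j
      = ∑ i, (∑ j, G i j * g j i) * (lam / 2) := by
        refine Finset.sum_congr rfl fun i _ => ?_
        rw [Finset.sum_mul]
        refine Finset.sum_congr rfl fun j _ => ?_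
        rw [hS i j, hsymm i j]; ring
    _ = ∑ _i : Fin n, lam / 2 := by
        refine Finset.sum_congr rfl fun i _ => by rw [hGgd i, one_mul]
    _ = (n : ℝ) * lam / 2 := by simp [Finset.sum_const]; ring
end

section
/- Let n ≥ 2, let g be a symmetric invertible n×n real matrix with inverse matrix G, let R : Fin n → Fin n → Fin n → Fin n → ℝ be a (0,4)-tensor, and let β : ℝ. Define S i j = β * g i j and R̄ m i j k = R m i j k + g m k * S i j − g m j * S i k + g i j * S m k − g i k * S m j. Define the Ricci contraction of a (0,4)-tensor T by Ric(T) i j = Σ_{m,k} G m k * T m i j k, its scalar by sc(T) = Σ_{i,j} G i j * Ric(T) i j, and its concircular tensor by Z(T) m i j k = T m i j k − (sc(T)/(n*(n−1))) * (g m k * g i j − g m j * g i k). Then Z(R̄) m i j k = Z(R) m i j k for all indices m, i, j, k. -/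
/-- Sufficiency half of Theorem 4.2: if `S_{ij} = β g_{ij}` then the concircular
curvature tensors of `∇` and `∇̄` coincide. -/
theorem stmt_2 (n : ℕ) (hn : 2 ≤ n) (g G : Fin n → Fin n → ℝ)
    (hsymm : ∀ i j, g i j = g j i)
    (hgG : ∀ i j, (∑ k, g i k * G k j) = if i = j then (1 : ℝ) else 0)
    (hGg : ∀ i j, (∑ k, G i k * g k j) = if i = j then (1 : ℝ) else 0)
    (R : Fin n → Fin n → Fin n → Fin n → ℝ)
    (β : ℝ) (S : Fin n → Fin n → ℝ)
    (hS : ∀ i j, S i j = β * g i j)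
    (Rbar : Fin n → Fin n → Fin n → Fin n → ℝ)
    (hRbar : ∀ m i j k, Rbar m i j k =
      R m i j k + g m k * S i j - g m j * S i k + g i j * S m k - g i k * S m j) :
    ∀ m i j k, concirc04 g G Rbar m i j k = concirc04 g G R m i j k := by
  -- key fact A: trace of G·g is n
  have factA : (∑ m, ∑ k, G m k * g m k) = (n : ℝ) := by
    have h1 : ∀ m : Fin n, (∑ k, G m k * g m k) = 1 := by
      intro m
      have := hGg m m
      simp only [if_true, eq_self_iff_true] at this
      rw [← this]
      exact Finset.sum_congr rfl fun k _ => by rw [hsymm m k]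
    simp [h1]
  -- key fact B: ∑ m k, G m k * g m j * g i k = g i j
  have factB : ∀ i j : Fin n, (∑ m, ∑ k, G m k * (g m j * g i k)) = g i j := by
    intro i j
    rw [Finset.sum_comm]
    have h1 : ∀ k : Fin n, (∑ m, G m k * (g m j * g i k)) =
        (if j = k then (1 : ℝ) else 0) * g i k := by
      intro k
      rw [← hgG j k, Finset.sum_mul]
      exact Finset.sum_congr rfl fun m _ => by rw [hsymm m j]; ring
    simp [h1]
  -- Ricci of Rbar
  have hric : ∀ i j, ricci04 G Rbar i j = ricci04 G R i j + 2 * β * ((n : ℝ) - 1) * g i j := by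
    intro i j
    unfold ricci04
    have expand : ∀ m' k', G m' k' * Rbar m' i j k' =
        G m' k' * R m' i j k' + (2 * β * g i j) * (G m' k' * g m' k')
          - 2 * β * (G m' k' * (g m' j * g i k')) := by
      intro m' k'
      rw [hRbar, hS, hS, hS, hS]; ring
    simp only [expand, Finset.sum_add_distrib, Finset.sum_sub_distrib, ← Finset.mul_sum]
    rw [factA, factB]
    ring
  -- scalar of Rbar
  have hsc : scalar04 G Rbar = scalar04 G R + 2 * β * (n : ℝ) * ((n : ℝ) - 1) := by
    unfold scalar04
    have expand : ∀ i j : Fin n, G i j * ricci04 G Rbar i j =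
        G i j * ricci04 G R i j + (2 * β * ((n : ℝ) - 1)) * (G i j * g i j) := by
      intro i j; rw [hric]; ring
    simp only [expand, Finset.sum_add_distrib, ← Finset.mul_sum]
    rw [factA]; ring
  -- nonvanishing denominator
  have hnpos : (0 : ℝ) < (n : ℝ) := by positivity
  have hne : (n : ℝ) * ((n : ℝ) - 1) ≠ 0 := by
    have h2 : (2 : ℝ) ≤ (n : ℝ) := by exact_mod_cast hn
    have : (1 : ℝ) ≤ (n : ℝ) - 1 := by linarith
    positivity
  intro m i j k
  unfold concirc04
  rw [hsc, hRbar, hS, hS, hS, hS]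
  have hne1 : (n : ℝ) - 1 ≠ 0 := right_ne_zero_of_mul hne
  field_simp
  ring
end

section
/- Let n ≥ 2, let g be a symmetric invertible n×n real matrix with inverse matrix G, let R : Fin n → Fin n → Fin n → Fin n → ℝ be a (1,3)-tensor (first index contravariant) and S : Fin n → Fin n → ℝ a (0,2)-tensor. Define R̄ h i j k = R h i j k + (if h = k then 1 else 0) * S i j − (if h = j then 1 else 0) * S i k + g i j * (Σ_r G h r * S r k) − g i k * (Σ_r G h r * S r j). For a (1,3)-tensor T define Ric(T) i j = Σ_k T k i j k, sc(T) = Σ_{i,j} G i j * Ric(T) i j, and Z(T) h i j k = T h i j k − (sc(T)/(n*(n−1))) * ((if h = k then 1 else 0) * g i j − (if h = j then 1 else 0) * g i k). Let trS = Σ_{m,k} G m k * S m k. Then for all indices h, i, j, k: Z(R̄) h i j k = Z(R) h i j k + (if h = k then 1 else 0) * S i j − (if h = j then 1 else 0) * S i k + g i j * (Σ_m G h m * S m k) − g i k * (Σ_m G h m * S m j) − (2*trS/n) * ((if h = k then 1 else 0) * g i j − (if h = j then 1 else 0) * g i k). -/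
/-- Ricci contraction of a (1,3)-tensor: `Ric(T) i j = Σ_k T k i j k`. -/
noncomputable def ricci13 {n : ℕ}
    (T : Fin n → Fin n → Fin n → Fin n → ℝ) (i j : Fin n) : ℝ :=
  ∑ k, T k i j k

/-- Scalar of a (1,3)-tensor: `sc(T) = Σ_{i,j} G i j * Ric(T) i j`. -/
noncomputable def scalar13 {n : ℕ} (G : Fin n → Fin n → ℝ)
    (T : Fin n → Fin n → Fin n → Fin n → ℝ) : ℝ :=
  ∑ i, ∑ j, G i j * ricci13 T i j

/-- Concircular curvature tensor of a (1,3)-tensor. -/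
noncomputable def concirc13 {n : ℕ} (g G : Fin n → Fin n → ℝ)
    (T : Fin n → Fin n → Fin n → Fin n → ℝ) (h i j k : Fin n) : ℝ :=
  T h i j k - (scalar13 G T / ((n : ℝ) * ((n : ℝ) - 1))) *
    ((if h = k then (1 : ℝ) else 0) * g i j - (if h = j then (1 : ℝ) else 0) * g i k)

/-- Equation (2.9): the relation between the concircular curvature tensors
`Z^h_{ijk}` and `Z̄^h_{ijk}` of `∇` and `∇̄`. -/
theorem stmt_9 (n : ℕ) (hn : 2 ≤ n) (g G : Fin n → Fin n → ℝ)
    (hsymm : ∀ i j, g i j = g j i)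
    (hgG : ∀ i j, (∑ k, g i k * G k j) = if i = j then (1 : ℝ) else 0)
    (hGg : ∀ i j, (∑ k, G i k * g k j) = if i = j then (1 : ℝ) else 0)
    (R : Fin n → Fin n → Fin n → Fin n → ℝ)
    (S : Fin n → Fin n → ℝ)
    (Rbar : Fin n → Fin n → Fin n → Fin n → ℝ)
    (hRbar : ∀ h i j k, Rbar h i j k =
      R h i j k + (if h = k then (1 : ℝ) else 0) * S i j
        - (if h = j then (1 : ℝ) else 0) * S i k
        + g i j * (∑ r, G h r * S r k) - g i k * (∑ r, G h r * S r j)) :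
    ∀ h i j k, concirc13 g G Rbar h i j k =
      concirc13 g G R h i j k
        + (if h = k then (1 : ℝ) else 0) * S i j
        - (if h = j then (1 : ℝ) else 0) * S i k
        + g i j * (∑ m, G h m * S m k) - g i k * (∑ m, G h m * S m j)
        - (2 * (∑ m, ∑ k', G m k' * S m k') / (n : ℝ)) *
            ((if h = k then (1 : ℝ) else 0) * g i j
              - (if h = j then (1 : ℝ) else 0) * g i k) := by
  classical
  have hGsym : ∀ a b, G a b = G b a := by
    intro a b
    have h1 : G a b = ∑ m, (if m = a then (1:ℝ) else 0) * G m b := by simp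
    rw [h1]
    calc ∑ m, (if m = a then (1:ℝ) else 0) * G m b
        = ∑ m, (∑ l, g m l * G l a) * G m b := by simp_rw [hgG]
      _ = ∑ l, (∑ m, g l m * G m b) * G l a := by
          simp_rw [Finset.sum_mul]
          rw [Finset.sum_comm]
          apply Finset.sum_congr rfl; intro l _
          apply Finset.sum_congr rfl; intro m _
          rw [hsymm l m]; ring
      _ = ∑ l, (if l = b then (1:ℝ) else 0) * G l a := by simp_rw [hgG]
      _ = G b a := by simp
  have hRic : ∀ i j, ricci13 Rbar i j =
      ricci13 R i j + ((n:ℝ) - 2) * S i j + g i j * (∑ m, ∑ k', G m k' * S m k') := by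
    intro i j
    unfold ricci13
    simp_rw [hRbar]
    have e1 : ∑ x : Fin n, (if (x:Fin n) = x then (1:ℝ) else 0) * S i j = (n:ℝ) * S i j := by
      simp [Finset.sum_const, Finset.card_univ]
    have e2 : ∑ x : Fin n, (if (x:Fin n) = j then (1:ℝ) else 0) * S i x = S i j := by
      simp
    have e3 : ∑ x : Fin n, g i j * (∑ r, G x r * S r x)
        = g i j * (∑ m, ∑ k', G m k' * S m k') := by
      rw [← Finset.mul_sum]
      congr 1
      -- ∑ x ∑ r G x r S r x = ∑ m ∑ k' G m k' S m k'
      rw [Finset.sum_comm]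
      apply Finset.sum_congr rfl; intro m _
      apply Finset.sum_congr rfl; intro k' _
      rw [hGsym k' m]
    have e4 : ∑ x : Fin n, g i x * (∑ r, G x r * S r j) = S i j := by
      calc ∑ x : Fin n, g i x * (∑ r, G x r * S r j)
          = ∑ r, (∑ x, g i x * G x r) * S r j := by
            simp_rw [Finset.mul_sum]
            rw [Finset.sum_comm]
            simp_rw [Finset.sum_mul]
            apply Finset.sum_congr rfl; intro r _
            apply Finset.sum_congr rfl; intro x _
            ring
        _ = ∑ r, (if i = r then (1:ℝ) else 0) * S r j := by simp_rw [hgG]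
        _ = S i j := by simp
    simp only [Finset.sum_add_distrib, Finset.sum_sub_distrib, e1, e2, e3, e4,
      if_true, one_mul, Finset.sum_const, Finset.card_univ, nsmul_eq_mul, Fintype.card_fin,
      smul_eq_mul]
    ring
  have hgGtr : (∑ i, ∑ j, G i j * g i j) = (n : ℝ) := by
    have : ∀ i : Fin n, ∑ j, G i j * g i j = 1 := by
      intro i
      have := hGg i i
      simp at this
      calc ∑ j, G i j * g i j = ∑ j, G i j * g j i := by
            apply Finset.sum_congr rfl; intro j _; rw [hsymm i j]
        _ = 1 := by rw [hGg i i]; simp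
    simp [this, Finset.sum_const, Finset.card_univ]
  have hsc : scalar13 G Rbar = scalar13 G R + (2 * (n:ℝ) - 2) * (∑ m, ∑ k', G m k' * S m k') := by
    unfold scalar13
    simp_rw [hRic]
    simp only [mul_add, Finset.sum_add_distrib]
    have a1 : ∑ i, ∑ j, G i j * (((n:ℝ) - 2) * S i j)
        = ((n:ℝ) - 2) * (∑ m, ∑ k', G m k' * S m k') := by
      simp_rw [Finset.mul_sum]
      apply Finset.sum_congr rfl; intro i _
      apply Finset.sum_congr rfl; intro j _
      ring
    have a2 : ∑ i, ∑ j, G i j * (g i j * (∑ m, ∑ k', G m k' * S m k'))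
        = (n:ℝ) * (∑ m, ∑ k', G m k' * S m k') := by
      calc ∑ i, ∑ j, G i j * (g i j * (∑ m, ∑ k', G m k' * S m k'))
          = (∑ i, ∑ j, G i j * g i j) * (∑ m, ∑ k', G m k' * S m k') := by
            simp_rw [Finset.sum_mul]
            apply Finset.sum_congr rfl; intro i _
            apply Finset.sum_congr rfl; intro j _
            ring
        _ = (n:ℝ) * (∑ m, ∑ k', G m k' * S m k') := by rw [hgGtr]
    rw [a1, a2]; ring
  intro h i j k
  have hn0 : (n : ℝ) ≠ 0 := by
    have : (0:ℝ) < n := by exact_mod_cast lt_of_lt_of_le (by norm_num) hn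
    linarith
  have hn1 : (n : ℝ) - 1 ≠ 0 := by
    have : (2:ℝ) ≤ n := by exact_mod_cast hn
    linarith
  unfold concirc13
  rw [hsc, hRbar]
  have key : (scalar13 G R + (2 * (n:ℝ) - 2) * (∑ m, ∑ k', G m k' * S m k')) / ((n:ℝ) * ((n:ℝ) - 1))
      = scalar13 G R / ((n:ℝ) * ((n:ℝ) - 1)) + 2 * (∑ m, ∑ k', G m k' * S m k') / (n:ℝ) := by
    field_simp
  rw [key]
  ring
end

section
/- Let n ≥ 2, let g be a symmetric invertible n×n real matrix with inverse matrix G, let R : Fin n → Fin n → Fin n → Fin n → ℝ be a (0,4)-tensor and S : Fin n → Fin n → ℝ a (0,2)-tensor. Define R̄ m i j k = R m i j k + g m k * S i j − g m j * S i k + g i j * S m k − g i k * S m j. For a (0,4)-tensor T define Ric(T) i j = Σ_{m,k} G m k * T m i j k, sc(T) = Σ_{i,j} G i j * Ric(T) i j, and Z(T) m i j k = T m i j k − (sc(T)/(n*(n−1))) * (g m k * g i j − g m j * g i k). Let trS = Σ_{m,k} G m k * S m k. Then for all indices m, i, j, k: Z(R̄) m i j k = Z(R) m i j k + g m k * S i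 j − g m j * S i k + g i j * S m k − g i k * S m j − (2*trS/n) * (g m k * g i j − g m j * g i k). -/
/-- Equation (2.10): `Z̄_{mijk} = Z_{mijk} + g_{mk}S_{ij} − g_{mj}S_{ik}
+ g_{ij}S_{mk} − g_{ik}S_{mj} − (2S/n)(g_{mk}g_{ij} − g_{mj}g_{ik})`. -/
theorem stmt_10 (n : ℕ) (hn : 2 ≤ n) (g G : Fin n → Fin n → ℝ)
    (hsymm : ∀ i j, g i j = g j i)
    (hgG : ∀ i j, (∑ k, g i k * G k j) = if i = j then (1 : ℝ) else 0)
    (hGg : ∀ i j, (∑ k, G i k * g k j) = if i = j then (1 : ℝ) else 0)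
    (R : Fin n → Fin n → Fin n → Fin n → ℝ)
    (S : Fin n → Fin n → ℝ)
    (Rbar : Fin n → Fin n → Fin n → Fin n → ℝ)
    (hRbar : ∀ m i j k, Rbar m i j k =
      R m i j k + g m k * S i j - g m j * S i k + g i j * S m k - g i k * S m j) :
    ∀ m i j k, concirc04 g G Rbar m i j k =
      concirc04 g G R m i j k
        + g m k * S i j - g m j * S i k + g i j * S m k - g i k * S m j
        - (2 * (∑ m', ∑ k', G m' k' * S m' k') / (n : ℝ)) *
            (g m k * g i j - g m j * g i k) := by
  intro m i j k
  set trS := ∑ m', ∑ k', G m' k' * S m' k' with htrS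
  have trg : (∑ m', ∑ k', G m' k' * g m' k') = (n : ℝ) := by
    have h1 : ∀ m' : Fin n, (∑ k', G m' k' * g m' k') = 1 := by
      intro m'
      have h2 : (∑ k', G m' k' * g m' k') = ∑ k', G m' k' * g k' m' :=
        Finset.sum_congr rfl (fun k' _ => by rw [hsymm m' k'])
      rw [h2, hGg m' m']; simp
    simp [h1]
  have key1 : ∀ i j : Fin n, (∑ m', ∑ k', G m' k' * (g m' j * S i k')) = S i j := by
    intro i j
    rw [Finset.sum_comm]
    have h1 : ∀ k' : Fin n, (∑ m', G m' k' * (g m' j * S i k'))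
        = (∑ m', g j m' * G m' k') * S i k' := by
      intro k'
      rw [Finset.sum_mul]
      exact Finset.sum_congr rfl (fun m' _ => by rw [hsymm m' j]; ring)
    simp_rw [h1, hgG]
    simp
  have key2 : ∀ i j : Fin n, (∑ m', ∑ k', G m' k' * (g i k' * S m' j)) = S i j := by
    intro i j
    have h1 : ∀ m' : Fin n, (∑ k', G m' k' * (g i k' * S m' j))
        = (∑ k', G m' k' * g k' i) * S m' j := by
      intro m'
      rw [Finset.sum_mul]
      exact Finset.sum_congr rfl (fun k' _ => by rw [hsymm i k']; ring)
    simp_rw [h1, hGg]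
    simp
  have key3 : ∀ i j : Fin n, (∑ m', ∑ k', G m' k' * (g m' k' * S i j)) = (n : ℝ) * S i j := by
    intro i j
    have h1 : (∑ m', ∑ k', G m' k' * (g m' k' * S i j))
        = (∑ m', ∑ k', G m' k' * g m' k') * S i j := by
      simp_rw [Finset.sum_mul]
      exact Finset.sum_congr rfl (fun m' _ => Finset.sum_congr rfl (fun k' _ => by ring))
    rw [h1, trg]
  have key4 : ∀ i j : Fin n, (∑ m', ∑ k', G m' k' * (g i j * S m' k')) = g i j * trS := by
    intro i j
    rw [htrS, Finset.mul_sum]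
    refine Finset.sum_congr rfl (fun m' _ => ?_)
    rw [Finset.mul_sum]
    exact Finset.sum_congr rfl (fun k' _ => by ring)
  have hric : ∀ i j : Fin n, ricci04 G Rbar i j
      = ricci04 G R i j + ((n : ℝ) - 2) * S i j + g i j * trS := by
    intro i j
    have hexp : ricci04 G Rbar i j
        = ricci04 G R i j + (∑ m', ∑ k', G m' k' * (g m' k' * S i j))
          - (∑ m', ∑ k', G m' k' * (g m' j * S i k'))
          + (∑ m', ∑ k', G m' k' * (g i j * S m' k'))
          - (∑ m', ∑ k', G m' k' * (g i k' * S m' j)) := by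
      simp only [ricci04, hRbar, mul_add, mul_sub, Finset.sum_add_distrib,
        Finset.sum_sub_distrib]
    rw [hexp, key1, key2, key3, key4]
    ring
  have hsc : scalar04 G Rbar = scalar04 G R + 2 * ((n : ℝ) - 1) * trS := by
    simp only [scalar04]
    simp_rw [hric, mul_add, Finset.sum_add_distrib]
    have e1 : (∑ i, ∑ j, G i j * (((n : ℝ) - 2) * S i j)) = ((n : ℝ) - 2) * trS := by
      rw [htrS, Finset.mul_sum]
      refine Finset.sum_congr rfl (fun i _ => ?_)
      rw [Finset.mul_sum]
      exact Finset.sum_congr rfl (fun j _ => by ring)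
    have e2 : (∑ i, ∑ j, G i j * (g i j * trS)) = (n : ℝ) * trS := by
      have h1 : (∑ i, ∑ j, G i j * (g i j * trS))
          = (∑ i, ∑ j, G i j * g i j) * trS := by
        simp_rw [Finset.sum_mul]
        exact Finset.sum_congr rfl (fun i _ => Finset.sum_congr rfl (fun j _ => by ring))
      rw [h1, trg]
    rw [e1, e2]
    ring
  have hn0 : (n : ℝ) ≠ 0 := by positivity
  have hn1 : (n : ℝ) - 1 ≠ 0 := by
    have : (2 : ℝ) ≤ (n : ℝ) := by exact_mod_cast hn
    linarith
  simp only [concirc04, hRbar, hsc]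
  field_simp
  ring
end

section
/- Let n ≥ 2, let g be a symmetric invertible n×n real matrix with inverse matrix G, let R : Fin n → Fin n → Fin n → Fin n → ℝ be a (0,4)-tensor and S : Fin n → Fin n → ℝ a (0,2)-tensor. Define R̄ m i j k = R m i j k + g m k * S i j − g m j * S i k + g i j * S m k − g i k * S m j. For a (0,4)-tensor T define Ric(T) i j = Σ_{m,k} G m k * T m i j k, sc(T) = Σ_{i,j} G i j * Ric(T) i j, Z(T) m i j k = T m i j k − (sc(T)/(n*(n−1))) * (g m k * g i j − g m j * g i k), and Ric(Z(T)) i j = Σ_{m,k} G m k * Z(T) m i j k. Let trS = Σ_{m,k} G m k * S m k. Then for all i, j: Ric(Z(R̄)) i j = Ric(Z(R)) i j + (n−2) * S i j − ((n−2)/n) * trS * g i j. -/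
/-- Equation (2.11): `Z̄_{ij} = Z_{ij} + (n−2)S_{ij} − ((n−2)/n) S g_{ij}`. -/
theorem stmt_11 (n : ℕ) (hn : 2 ≤ n) (g G : Fin n → Fin n → ℝ)
    (hsymm : ∀ i j, g i j = g j i)
    (hgG : ∀ i j, (∑ k, g i k * G k j) = if i = j then (1 : ℝ) else 0)
    (hGg : ∀ i j, (∑ k, G i k * g k j) = if i = j then (1 : ℝ) else 0)
    (R : Fin n → Fin n → Fin n → Fin n → ℝ)
    (S : Fin n → Fin n → ℝ)
    (Rbar : Fin n → Fin n → Fin n → Fin n → ℝ)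
    (hRbar : ∀ m i j k, Rbar m i j k =
      R m i j k + g m k * S i j - g m j * S i k + g i j * S m k - g i k * S m j) :
    ∀ i j, ricci04 G (concirc04 g G Rbar) i j =
      ricci04 G (concirc04 g G R) i j + ((n : ℝ) - 2) * S i j
        - (((n : ℝ) - 2) / (n : ℝ)) * (∑ m, ∑ k, G m k * S m k) * g i j := by
  have h2 : (2:ℝ) ≤ (n:ℝ) := by exact_mod_cast hn
  have hn0 : (n:ℝ) ≠ 0 := by linarith
  have hn1 : (n:ℝ) - 1 ≠ 0 := by linarith
  -- trace of G against g is n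
  have trGg : (∑ m, ∑ k, G m k * g m k) = (n:ℝ) := by
    have h : ∀ m : Fin n, (∑ k, G m k * g m k) = 1 := by
      intro m
      have e : (∑ k, G m k * g m k) = ∑ k, G m k * g k m :=
        Finset.sum_congr rfl fun k _ => by rw [hsymm m k]
      rw [e, hGg m m]; simp
    simp [h]
  -- ∑_{m,k} G m k * g m a * f k = f a
  have lemA : ∀ (f : Fin n → ℝ) (a : Fin n),
      (∑ m, ∑ k, G m k * g m a * f k) = f a := by
    intro f a
    rw [Finset.sum_comm]
    have h : ∀ k : Fin n, (∑ m, G m k * g m a * f k)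
        = (if a = k then (1:ℝ) else 0) * f k := by
      intro k
      rw [← Finset.sum_mul]
      have e : (∑ m, G m k * g m a) = ∑ m, g a m * G m k :=
        Finset.sum_congr rfl fun m _ => by rw [hsymm m a]; ring
      rw [e, hgG a k]
    rw [Finset.sum_congr rfl fun k _ => h k]
    simp
  -- ∑_{m,k} G m k * g k a * f m = f a
  have lemB : ∀ (f : Fin n → ℝ) (a : Fin n),
      (∑ m, ∑ k, G m k * g k a * f m) = f a := by
    intro f a
    have h : ∀ m : Fin n, (∑ k, G m k * g k a * f m)
        = (if m = a then (1:ℝ) else 0) * f m := by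
      intro m
      rw [← Finset.sum_mul, hGg m a]
    rw [Finset.sum_congr rfl fun m _ => h m]
    simp
  -- Ricci of concircular tensor
  have hZ : ∀ (T : Fin n → Fin n → Fin n → Fin n → ℝ) (i j : Fin n),
      ricci04 G (concirc04 g G T) i j
        = ricci04 G T i j - scalar04 G T / (n:ℝ) * g i j := by
    intro T i j
    set c := scalar04 G T / ((n:ℝ) * ((n:ℝ) - 1)) with hc
    have expand : ∀ m k : Fin n,
        G m k * concirc04 g G T m i j k
          = G m k * T m i j k - c * g i j * (G m k * g m k)
            + c * (G m k * g m j * g i k) := by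
      intro m k; rw [concirc04]; ring
    have e1 : ricci04 G (concirc04 g G T) i j
        = (∑ m, ∑ k, G m k * T m i j k)
          - c * g i j * (∑ m, ∑ k, G m k * g m k)
          + c * (∑ m, ∑ k, G m k * g m j * g i k) := by
      rw [ricci04]
      rw [Finset.sum_congr rfl fun m _ => Finset.sum_congr rfl fun k _ => expand m k]
      simp [Finset.sum_add_distrib, Finset.sum_sub_distrib, ← Finset.mul_sum]
    rw [e1, trGg, lemA (fun k => g i k) j, ricci04, hc]
    field_simp
    ring
  -- Ricci of Rbar
  have hRic : ∀ i j : Fin n, ricci04 G Rbar i j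
      = ricci04 G R i j + ((n:ℝ) - 2) * S i j
        + (∑ m, ∑ k, G m k * S m k) * g i j := by
    intro i j
    have expand : ∀ m k : Fin n, G m k * Rbar m i j k
        = G m k * R m i j k + S i j * (G m k * g m k)
          - G m k * g m j * S i k + (g i j) * (G m k * S m k)
          - G m k * g k i * S m j := by
      intro m k; rw [hRbar, hsymm i k]; ring
    have e1 : ricci04 G Rbar i j
        = (∑ m, ∑ k, G m k * R m i j k)
          + S i j * (∑ m, ∑ k, G m k * g m k)
          - (∑ m, ∑ k, G m k * g m j * S i k)
          + g i j * (∑ m, ∑ k, G m k * S m k)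
          - (∑ m, ∑ k, G m k * g k i * S m j) := by
      rw [ricci04]
      rw [Finset.sum_congr rfl fun m _ => Finset.sum_congr rfl fun k _ => expand m k]
      simp [Finset.sum_add_distrib, Finset.sum_sub_distrib, ← Finset.mul_sum]
    rw [e1, trGg, lemA (fun k => S i k) j, lemB (fun m => S m j) i, ricci04]
    ring
  -- scalar of Rbar
  have hsc : scalar04 G Rbar
      = scalar04 G R + 2 * ((n:ℝ) - 1) * (∑ m, ∑ k, G m k * S m k) := by
    rw [scalar04, scalar04]
    have e1 : ∀ a b : Fin n, G a b * ricci04 G Rbar a b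
        = G a b * ricci04 G R a b + ((n:ℝ) - 2) * (G a b * S a b)
          + (∑ m, ∑ k, G m k * S m k) * (G a b * g a b) := by
      intro a b; rw [hRic a b]; ring
    rw [Finset.sum_congr rfl fun a _ => Finset.sum_congr rfl fun b _ => e1 a b]
    simp only [Finset.sum_add_distrib, ← Finset.mul_sum]
    rw [trGg]
    ring
  intro i j
  rw [hZ Rbar i j, hZ R i j, hRic i j, hsc]
  field_simp
  ring
end

section
/- Let n ≥ 2, let g be a symmetric invertible n×n real matrix with inverse matrix G, let R̄ : Fin n → Fin n → Fin n → Fin n → ℝ be a (1,3)-tensor (first index contravariant), let c : ℝ, and define R̄* h i j k = R̄ h i j k + 2*c * ((if h = k then 1 else 0) * g i j − (if h = j then 1 else 0) * g i k). For a (1,3)-tensor T define Ric(T) i j = Σ_k T k i j k, sc(T) = Σ_{i,j} G i j * Ric(T) i j, and Z(T) h i j k = T h i j k − (sc(T)/(n*(n−1))) * ((if h = k then 1 else 0) * g i j − (if h = j then 1 else 0) * g i k). Then Z(R̄*) h i j k = Z(R̄) h i j k for all indices h, i, j, k. -/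
/-- Main result of Section 2: the concircular curvature tensor of the
semi-symmetric non-metric connection is invariant under concircular
transformations, `Z̄*^h_{ijk} = Z̄^h_{ijk}`. -/
theorem stmt_13 (n : ℕ) (hn : 2 ≤ n) (g G : Fin n → Fin n → ℝ)
    (hsymm : ∀ i j, g i j = g j i)
    (hgG : ∀ i j, (∑ k, g i k * G k j) = if i = j then (1 : ℝ) else 0)
    (hGg : ∀ i j, (∑ k, G i k * g k j) = if i = j then (1 : ℝ) else 0)
    (Rbar : Fin n → Fin n → Fin n → Fin n → ℝ) (c : ℝ)
    (Rstar : Fin n → Fin n → Fin n → Fin n → ℝ)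
    (hRstar : ∀ h i j k, Rstar h i j k =
      Rbar h i j k + 2 * c *
        ((if h = k then (1 : ℝ) else 0) * g i j
          - (if h = j then (1 : ℝ) else 0) * g i k)) :
    ∀ h i j k, concirc13 g G Rstar h i j k = concirc13 g G Rbar h i j k := by
  have hric : ∀ i j, ricci13 Rstar i j = ricci13 Rbar i j + 2 * c * ((n : ℝ) - 1) * g i j := by
    intro i j
    simp only [ricci13, hRstar, eq_self_iff_true, if_true, one_mul, mul_sub,
      Finset.sum_add_distrib, Finset.sum_sub_distrib, Finset.sum_const,
      Finset.card_univ, Fintype.card_fin, nsmul_eq_mul]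
    have hs : ∑ x : Fin n, 2 * c * ((if x = j then (1:ℝ) else 0) * g i x)
        = 2 * c * g i j := by
      rw [Finset.sum_eq_single j]
      · simp
      · intro b _ hb; simp [hb]
      · simp
    rw [hs]; ring
  have htr : ∑ i : Fin n, ∑ j : Fin n, G i j * g i j = (n : ℝ) := by
    have h1 : ∀ i : Fin n, ∑ j : Fin n, G i j * g i j = 1 := by
      intro i
      have h2 := hGg i i
      simp only [if_pos] at h2
      rw [← h2]
      exact Finset.sum_congr rfl fun j _ => by rw [hsymm i j]
    simp [h1]
  have hsc : scalar13 G Rstar = scalar13 G Rbar + 2 * c * ((n:ℝ) * ((n:ℝ) - 1)) := by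
    simp only [scalar13, hric]
    have heq : ∀ i j : Fin n, G i j * (ricci13 Rbar i j + 2 * c * ((n : ℝ) - 1) * g i j)
        = G i j * ricci13 Rbar i j + (2 * c * ((n:ℝ)-1)) * (G i j * g i j) := by
      intro i j; ring
    simp only [heq, Finset.sum_add_distrib, ← Finset.mul_sum, htr]
    ring
  have h2n : (2 : ℝ) ≤ (n : ℝ) := by exact_mod_cast hn
  have hne : (n : ℝ) * ((n : ℝ) - 1) ≠ 0 :=
    mul_ne_zero (by linarith) (by linarith)
  intro h i j k
  simp only [concirc13, hRstar, hsc]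
  rw [add_div, mul_div_cancel_right₀ _ hne]
  ring
end
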